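/- Let β ≥ 1, δ ∈ (0,1], and f ∈ H¹(ℝ₊) with ∫₀^∞ (1+δx)^β (f² + (f')²) dx < ∞. Then there is a constant C > 0 independent of δ and f such that ∫₀^∞ (1+δx)^{β-1} |f(x)|³ dx ≤ C δ^{-3/2} (∫₀^∞ (1+δx) f² dx)^{1/2} ( f(0)² + δ² ∫₀^∞ (1+δx)^{β-2} f² dx + ∫₀^∞ (1+δx)^β (f')² dx ). -/

import Mathlib

open MeasureTheory Set

/-- elementary AM-GM-type lemma: if `c^2 ≤ A*B` then `c ≤ (t*A + B/t)/2`. -/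
lemma stmt8_amgm {A B c t : ℝ} (hA : 0 ≤ A) (hB : 0 ≤ B) (hc : 0 ≤ c) (ht : 0 < t)
    (h : c ^ 2 ≤ A * B) : c ≤ (t * A + B / t) / 2 := by
  have key : t * A * (B / t) = A * B := by field_simp
  have h1 : (2 * c) ^ 2 ≤ (t * A + B / t) ^ 2 := by nlinarith [sq_nonneg (t * A - B / t)]
  have h2 : 0 ≤ t * A + B / t := by positivity
  have h3 := Real.sqrt_le_sqrt h1
  rw [Real.sqrt_sq (by positivity), Real.sqrt_sq h2] at h3
  linarith

set_option maxHeartbeats 2000000 in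
/-- weighted interpolation inequality (Lemma 5.3) controlling the
cubic weighted integral, with a constant independent of `δ` and `f`. -/
theorem stmt_8 :
    ∃ C : ℝ, 0 < C ∧ ∀ (β δ : ℝ) (f f' : ℝ → ℝ),
      1 ≤ β → 0 < δ → δ ≤ 1 →
      (∀ x ∈ Ici (0 : ℝ), HasDerivAt f (f' x) x) →
      IntegrableOn (fun x => (1 + δ * x) ^ β * ((f x) ^ 2 + (f' x) ^ 2)) (Ioi 0) →
      IntegrableOn (fun x => (1 + δ * x) ^ (β - 1) * |f x| ^ 3) (Ioi 0) →
      IntegrableOn (fun x => (1 + δ * x) ^ (β - 2) * (f x) ^ 2) (Ioi 0) →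
      IntegrableOn (fun x => (1 + δ * x) * (f x) ^ 2) (Ioi 0) →
      ∫ x in Ioi (0 : ℝ), (1 + δ * x) ^ (β - 1) * |f x| ^ 3 ≤
        C * δ ^ (-(3 / 2 : ℝ)) *
          Real.sqrt (∫ x in Ioi (0 : ℝ), (1 + δ * x) * (f x) ^ 2) *
          ((f 0) ^ 2 + δ ^ 2 * (∫ x in Ioi (0 : ℝ), (1 + δ * x) ^ (β - 2) * (f x) ^ 2)
            + ∫ x in Ioi (0 : ℝ), (1 + δ * x) ^ β * (f' x) ^ 2) := by
  refine ⟨2, by norm_num, ?_⟩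
  intro β δ f f' hβ hδ hδ1 hder hIΦ hIcube hII2 hII1
  have hδ0 : (0:ℝ) < δ := hδ
  -- basic positivity of the weight
  have hwpos : ∀ x : ℝ, 0 ≤ x → 0 < 1 + δ * x := by
    intro x hx; nlinarith
  have hw1 : ∀ x : ℝ, 0 ≤ x → 1 ≤ 1 + δ * x := by
    intro x hx; nlinarith
  -- derivative of the weight power
  have hW : ∀ (p : ℝ) (x : ℝ), 0 ≤ x →
      HasDerivAt (fun y => (1 + δ * y) ^ p) (δ * p * (1 + δ * x) ^ (p - 1)) x := by
    intro p x hx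
    have h0 : HasDerivAt (fun y : ℝ => 1 + δ * y) δ x := by
      simpa using ((hasDerivAt_id x).const_mul δ).const_add 1
    exact h0.rpow_const (Or.inl (ne_of_gt (hwpos x hx)))
  -- measurability
  have hWm : ∀ p : ℝ, AEMeasurable (fun x => (1 + δ * x) ^ p) (volume.restrict (Ioi 0)) := by
    intro p
    exact ContinuousOn.aemeasurable
      (fun x hx => ((hW p x (le_of_lt hx)).continuousAt).continuousWithinAt) measurableSet_Ioi
  have hfm : AEMeasurable f (volume.restrict (Ioi 0)) :=
    ContinuousOn.aemeasurable
      (fun x hx => ((hder x (mem_Ici.2 (le_of_lt hx))).continuousAt).continuousWithinAt) measurableSet_Ioi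
  have hf'm : AEMeasurable f' (volume.restrict (Ioi 0)) := by
    refine ((measurable_deriv f).aemeasurable).congr ?_
    filter_upwards [ae_restrict_mem (measurableSet_Ioi (a := (0:ℝ)))] with x hx
    exact ((hder x (mem_Ici.2 (le_of_lt hx))).deriv)
  -- integrability of auxiliary functions
  have hf'2 : IntegrableOn (fun x => (1 + δ * x) ^ β * (f' x) ^ 2) (Ioi 0) := by
    refine hIΦ.mono' (((hWm β).mul ((hf'm.pow_const 2))).aestronglyMeasurable) ?_
    filter_upwards [ae_restrict_mem (measurableSet_Ioi (a := (0:ℝ)))] with x hx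
    have h1 : (0:ℝ) ≤ (1 + δ * x) ^ β := Real.rpow_nonneg (hwpos x (le_of_lt hx)).le β
    rw [Real.norm_eq_abs, abs_of_nonneg (mul_nonneg h1 (sq_nonneg _))]
    nlinarith [sq_nonneg (f x)]
  have hg : IntegrableOn (fun x => (1 + δ * x) ^ (β - 1) * (f x) ^ 2) (Ioi 0) := by
    refine hIΦ.mono' (((hWm (β - 1)).mul ((hfm.pow_const 2))).aestronglyMeasurable) ?_
    filter_upwards [ae_restrict_mem (measurableSet_Ioi (a := (0:ℝ)))] with x hx
    have h1 : (0:ℝ) ≤ (1 + δ * x) ^ (β - 1) :=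
      Real.rpow_nonneg (hwpos x (le_of_lt hx)).le _
    have h2 : (1 + δ * x) ^ (β - 1) ≤ (1 + δ * x) ^ β :=
      Real.rpow_le_rpow_of_exponent_le (hw1 x (le_of_lt hx)) (by linarith)
    rw [Real.norm_eq_abs, abs_of_nonneg (mul_nonneg h1 (sq_nonneg _))]
    nlinarith [sq_nonneg (f x), sq_nonneg (f' x)]
  have hK' : IntegrableOn (fun x => (1 + δ * x) ^ (β - 1) * |f x * f' x|) (Ioi 0) := by
    refine (hII2.add hf'2).mono'
      (((hWm (β - 1)).mul (continuous_abs.measurable.comp_aemeasurable (hfm.mul hf'm))).aestronglyMeasurable) ?_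
    filter_upwards [ae_restrict_mem (measurableSet_Ioi (a := (0:ℝ)))] with x hx
    have hwx := hwpos x (le_of_lt hx)
    have h1 : (0:ℝ) ≤ (1 + δ * x) ^ (β - 1) := Real.rpow_nonneg hwx.le _
    rw [Real.norm_eq_abs, abs_of_nonneg (mul_nonneg h1 (abs_nonneg _))]
    have hsq : ((1 + δ * x) ^ (β - 1) * |f x * f' x|) ^ 2 =
        ((1 + δ * x) ^ (β - 2) * (f x) ^ 2) * ((1 + δ * x) ^ β * (f' x) ^ 2) := by
      rw [mul_pow, sq_abs]
      rw [show ((1 + δ * x) ^ (β - 1)) ^ 2 = (1 + δ * x) ^ (β - 1) * (1 + δ * x) ^ (β - 1) from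
        sq _, ← Real.rpow_add hwx, show (β - 1) + (β - 1) = (β - 2) + β by ring,
        Real.rpow_add hwx]
      ring
    have := stmt8_amgm (A := (1 + δ * x) ^ (β - 2) * (f x) ^ 2)
      (B := (1 + δ * x) ^ β * (f' x) ^ 2) (t := 1)
      (by positivity) (by positivity) (mul_nonneg h1 (abs_nonneg _)) one_pos (le_of_eq hsq)
    simp only [one_mul, div_one] at this
    simp only [Pi.add_apply]
    have e1 : (0:ℝ) ≤ (1 + δ * x) ^ (β - 2) * f x ^ 2 := by positivity
    have e2 : (0:ℝ) ≤ (1 + δ * x) ^ β * f' x ^ 2 := by positivity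
    linarith
  -- the derivative of g x = (1+δx)^(β-1) f x ^ 2
  set G : ℝ → ℝ := fun x =>
    δ * (β - 1) * (1 + δ * x) ^ (β - 2) * f x ^ 2 + (1 + δ * x) ^ (β - 1) * (2 * f x * f' x)
    with hGdef
  have hg' : ∀ x : ℝ, 0 ≤ x →
      HasDerivAt (fun y => (1 + δ * y) ^ (β - 1) * f y ^ 2) (G x) x := by
    intro x hx
    have h1 := (hW (β - 1) x hx).mul ((hder x hx).pow 2)
    rw [show β - 1 - 1 = β - 2 by ring] at h1
    refine h1.congr_deriv ?_
    simp only [hGdef, Pi.pow_apply]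
    ring
  have hGint : IntegrableOn G (Ioi 0) := by
    refine (((hII2.const_mul (β - 1)).add (hII2.add hf'2)).mono') ?_ ?_
    · refine AEMeasurable.aestronglyMeasurable ?_
      exact ((((hWm (β - 2)).const_mul (δ * (β - 1))).mul (hfm.pow_const 2)).add
        ((hWm (β - 1)).mul (((hfm.const_mul 2).mul hf'm))))
    · filter_upwards [ae_restrict_mem (measurableSet_Ioi (a := (0:ℝ)))] with x hx
      have hwx := hwpos x (le_of_lt hx)
      have h1 : (0:ℝ) ≤ (1 + δ * x) ^ (β - 1) := Real.rpow_nonneg hwx.le _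
      have h2 : (0:ℝ) ≤ (1 + δ * x) ^ (β - 2) := Real.rpow_nonneg hwx.le _
      simp only [hGdef, Pi.add_apply]
      have hsq : ((1 + δ * x) ^ (β - 1) * |f x * f' x|) ^ 2 =
          ((1 + δ * x) ^ (β - 2) * (f x) ^ 2) * ((1 + δ * x) ^ β * (f' x) ^ 2) := by
        rw [mul_pow, sq_abs]
        rw [show ((1 + δ * x) ^ (β - 1)) ^ 2 = (1 + δ * x) ^ (β - 1) * (1 + δ * x) ^ (β - 1) from
          sq _, ← Real.rpow_add hwx, show (β - 1) + (β - 1) = (β - 2) + β by ring,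
          Real.rpow_add hwx]
        ring
      have ham := stmt8_amgm (A := (1 + δ * x) ^ (β - 2) * (f x) ^ 2)
        (B := (1 + δ * x) ^ β * (f' x) ^ 2) (t := 1)
        (by positivity) (by positivity) (by positivity) one_pos (le_of_eq hsq)
      simp only [one_mul, div_one] at ham
      have habs : |(1 + δ * x) ^ (β - 1) * (2 * f x * f' x)| ≤
          2 * ((1 + δ * x) ^ (β - 1) * |f x * f' x|) := by
        rw [abs_mul, abs_of_nonneg h1]
        have : |2 * f x * f' x| = 2 * |f x * f' x| := by
          rw [show 2 * f x * f' x = 2 * (f x * f' x) by ring, abs_mul]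
          simp
        rw [this]; ring_nf; rfl
      have hterm1 : |δ * (β - 1) * (1 + δ * x) ^ (β - 2) * f x ^ 2| ≤
          (β - 1) * ((1 + δ * x) ^ (β - 2) * f x ^ 2) := by
        have : (0:ℝ) ≤ δ * (β - 1) * (1 + δ * x) ^ (β - 2) * f x ^ 2 := by
          have : (0:ℝ) ≤ β - 1 := by linarith
          positivity
        rw [abs_of_nonneg this]
        nlinarith [sq_nonneg (f x), mul_nonneg h2 (sq_nonneg (f x))]
      calc ‖δ * (β - 1) * (1 + δ * x) ^ (β - 2) * f x ^ 2 +
            (1 + δ * x) ^ (β - 1) * (2 * f x * f' x)‖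
          ≤ |δ * (β - 1) * (1 + δ * x) ^ (β - 2) * f x ^ 2| +
            |(1 + δ * x) ^ (β - 1) * (2 * f x * f' x)| := abs_add_le _ _
        _ ≤ (β - 1) * ((1 + δ * x) ^ (β - 2) * f x ^ 2) +
            ((1 + δ * x) ^ (β - 2) * f x ^ 2 + (1 + δ * x) ^ β * f' x ^ 2) := by
            have := habs; linarith
  -- K: the integral of the cross term
  set K : ℝ := ∫ x in Ioi (0:ℝ), (1 + δ * x) ^ (β - 1) * |f x * f' x| with hKdef
  have hK0 : 0 ≤ K := by
    refine setIntegral_nonneg measurableSet_Ioi (fun x hx => ?_)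
    exact mul_nonneg (Real.rpow_nonneg (hwpos x (le_of_lt hx)).le _) (abs_nonneg _)
  -- a.e. set inclusion : Icc x y up to null sets inside Ioi 0
  have hae0 : ∀ᵐ a : ℝ ∂volume, a ≠ 0 := by
    rw [MeasureTheory.ae_iff]
    convert Real.volume_singleton (a := (0:ℝ)) using 2
    ext a; simp
  -- key sup bound : (1+δx)^(β-1) f x ^2 ≤ 2K for all x ≥ 0
  have key1 : ∀ x : ℝ, 0 ≤ x → (1 + δ * x) ^ (β - 1) * f x ^ 2 ≤ 2 * K := by
    intro x hx
    refine le_of_forall_pos_le_add (fun ε hε => ?_)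
    -- find y ≥ x with small value
    have hex : ∃ y, x ≤ y ∧ (1 + δ * y) ^ (β - 1) * f y ^ 2 ≤ ε := by
      by_contra hcon
      push_neg at hcon
      have hconst : IntegrableOn (fun _ : ℝ => ε) (Ioi x) := by
        refine (hg.mono_set (Ioi_subset_Ioi hx)).mono' aestronglyMeasurable_const ?_
        filter_upwards [ae_restrict_mem (measurableSet_Ioi (a := x))] with y hy
        rw [Real.norm_eq_abs, abs_of_pos hε]
        exact (hcon y (le_of_lt hy)).le
      rw [integrableOn_const_iff] at hconst
      rcases hconst with h | h
      · exact absurd (enorm_eq_zero.1 h) (ne_of_gt hε)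
      · rw [Real.volume_Ioi] at h; exact absurd h (by simp)
    obtain ⟨y, hxy, hy⟩ := hex
    -- FTC on [x, y]
    have hsub : Icc x y ≤ᶠ[MeasureTheory.ae volume] Ioi (0:ℝ) := by
      filter_upwards [hae0] with a ha hIcc
      exact lt_of_le_of_ne (le_trans hx hIcc.1) (Ne.symm ha)
    have hGi : IntervalIntegrable G volume x y := by
      refine IntegrableOn.intervalIntegrable ?_
      rw [uIcc_of_le hxy]
      exact hGint.mono_set_ae hsub
    have hftc : ∫ s in x..y, G s =
        (1 + δ * y) ^ (β - 1) * f y ^ 2 - (1 + δ * x) ^ (β - 1) * f x ^ 2 := by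
      refine intervalIntegral.integral_eq_sub_of_hasDerivAt
        (f := fun y => (1 + δ * y) ^ (β - 1) * f y ^ 2) (f' := G) (fun s hs => ?_) hGi
      rw [uIcc_of_le hxy] at hs
      exact hg' s (le_trans hx hs.1)
    -- lower bound for the interval integral of G
    have hKi : IntervalIntegrable (fun s => -(2 * ((1 + δ * s) ^ (β - 1) * |f s * f' s|)))
        volume x y := by
      refine IntegrableOn.intervalIntegrable ?_
      rw [uIcc_of_le hxy]
      exact (IntegrableOn.mono_set_ae (hK'.const_mul 2) hsub).neg
    have hmono : ∫ s in x..y, -(2 * ((1 + δ * s) ^ (β - 1) * |f s * f' s|)) ≤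
        ∫ s in x..y, G s := by
      refine intervalIntegral.integral_mono_on hxy hKi hGi (fun s hs => ?_)
      have hs0 : (0:ℝ) ≤ s := le_trans hx hs.1
      have hwx := hwpos s hs0
      have h1 : (0:ℝ) ≤ (1 + δ * s) ^ (β - 1) := Real.rpow_nonneg hwx.le _
      have h2 : (0:ℝ) ≤ (1 + δ * s) ^ (β - 2) := Real.rpow_nonneg hwx.le _
      have hterm1 : (0:ℝ) ≤ δ * (β - 1) * (1 + δ * s) ^ (β - 2) * f s ^ 2 := by
        have : (0:ℝ) ≤ β - 1 := by linarith
        positivity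
      have habs : -(|f s * f' s|) ≤ f s * f' s := neg_abs_le _
      have : -(2 * ((1 + δ * s) ^ (β - 1) * |f s * f' s|)) ≤
          (1 + δ * s) ^ (β - 1) * (2 * f s * f' s) := by
        nlinarith [mul_le_mul_of_nonneg_left habs h1]
      simp only [hGdef]
      linarith
    have hcross : ∫ s in x..y, (1 + δ * s) ^ (β - 1) * |f s * f' s| ≤ K := by
      rw [intervalIntegral.integral_of_le hxy]
      refine setIntegral_mono_set hK' ?_ ?_
      · filter_upwards [ae_restrict_mem (measurableSet_Ioi (a := (0:ℝ)))] with s hs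
        exact mul_nonneg (Real.rpow_nonneg (hwpos s (le_of_lt hs)).le _) (abs_nonneg _)
      · exact HasSubset.Subset.eventuallyLE (Set.Ioc_subset_Ioi_self.trans (Ioi_subset_Ioi hx))
    have heq : ∫ s in x..y, -(2 * ((1 + δ * s) ^ (β - 1) * |f s * f' s|)) =
        -(2 * ∫ s in x..y, (1 + δ * s) ^ (β - 1) * |f s * f' s|) := by
      rw [intervalIntegral.integral_neg, intervalIntegral.integral_const_mul]
    rw [heq, hftc] at hmono
    linarith
  -- named integrals
  set I1 : ℝ := ∫ x in Ioi (0:ℝ), (1 + δ * x) * f x ^ 2 with hI1def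
  set I2 : ℝ := ∫ x in Ioi (0:ℝ), (1 + δ * x) ^ (β - 2) * f x ^ 2 with hI2def
  set I3 : ℝ := ∫ x in Ioi (0:ℝ), (1 + δ * x) ^ β * f' x ^ 2 with hI3def
  have hI10 : 0 ≤ I1 := setIntegral_nonneg measurableSet_Ioi
    (fun x hx => mul_nonneg (hwpos x (le_of_lt hx)).le (sq_nonneg _))
  have hI20 : 0 ≤ I2 := setIntegral_nonneg measurableSet_Ioi
    (fun x hx => mul_nonneg (Real.rpow_nonneg (hwpos x (le_of_lt hx)).le _) (sq_nonneg _))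
  have hI30 : 0 ≤ I3 := setIntegral_nonneg measurableSet_Ioi
    (fun x hx => mul_nonneg (Real.rpow_nonneg (hwpos x (le_of_lt hx)).le _) (sq_nonneg _))
  -- bound for K
  have hKb : K ≤ (δ / 2) * I2 + (1 / (2 * δ)) * I3 := by
    have hmono := setIntegral_mono_on hK'
      ((hII2.const_mul (δ / 2)).add (hf'2.const_mul (1 / (2 * δ)))) measurableSet_Ioi ?_
    · simp only [Pi.add_apply] at hmono
      rw [MeasureTheory.integral_add (hII2.const_mul (δ / 2)) (hf'2.const_mul (1 / (2 * δ))),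
        MeasureTheory.integral_const_mul, MeasureTheory.integral_const_mul] at hmono
      exact hmono
    · intro x hx
      have hwx := hwpos x (le_of_lt hx)
      have h1 : (0:ℝ) ≤ (1 + δ * x) ^ (β - 1) := Real.rpow_nonneg hwx.le _
      have hsq : ((1 + δ * x) ^ (β - 1) * |f x * f' x|) ^ 2 =
          ((1 + δ * x) ^ (β - 2) * (f x) ^ 2) * ((1 + δ * x) ^ β * (f' x) ^ 2) := by
        rw [mul_pow, sq_abs]
        rw [show ((1 + δ * x) ^ (β - 1)) ^ 2 = (1 + δ * x) ^ (β - 1) * (1 + δ * x) ^ (β - 1) from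
          sq _, ← Real.rpow_add hwx, show (β - 1) + (β - 1) = (β - 2) + β by ring,
          Real.rpow_add hwx]
        ring
      have ham := stmt8_amgm (A := (1 + δ * x) ^ (β - 2) * (f x) ^ 2)
        (B := (1 + δ * x) ^ β * (f' x) ^ 2) (t := δ)
        (by positivity) (by positivity) (by positivity) hδ0 (le_of_eq hsq)
      have heq2 : (δ * ((1 + δ * x) ^ (β - 2) * f x ^ 2) +
          ((1 + δ * x) ^ β * f' x ^ 2) / δ) / 2 =
          (δ / 2) * ((1 + δ * x) ^ (β - 2) * f x ^ 2) +
          (1 / (2 * δ)) * ((1 + δ * x) ^ β * f' x ^ 2) := by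
        field_simp
      rw [heq2] at ham
      simp only [Pi.add_apply]
      exact ham
  -- case split on I1
  rcases hI10.eq_or_lt with h0 | hI1pos
  · -- I1 = 0, so f = 0 a.e.
    have hae : (fun x => (1 + δ * x) * f x ^ 2) =ᶠ[MeasureTheory.ae (volume.restrict (Ioi 0))]
        0 := by
      refine (integral_eq_zero_iff_of_nonneg_ae ?_ hII1).1 h0.symm
      filter_upwards [ae_restrict_mem (measurableSet_Ioi (a := (0:ℝ)))] with x hx
      exact mul_nonneg (hwpos x (le_of_lt hx)).le (sq_nonneg _)
    have hLHS : ∫ x in Ioi (0:ℝ), (1 + δ * x) ^ (β - 1) * |f x| ^ 3 = 0 := by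
      refine integral_eq_zero_of_ae ?_
      filter_upwards [hae, ae_restrict_mem (measurableSet_Ioi (a := (0:ℝ)))] with x hx hx0
      have hwx := hwpos x (le_of_lt hx0)
      have : f x ^ 2 = 0 := by
        simp only [Pi.zero_apply] at hx
        rcases mul_eq_zero.1 hx with h | h
        · exact absurd h (ne_of_gt hwx)
        · exact h
      have hfx : f x = 0 := by
        exact pow_eq_zero_iff (n := 2) (by norm_num) |>.1 this
      simp [hfx]
    rw [hLHS, ← h0, Real.sqrt_zero]
    simp
  · -- I1 > 0
    set Bq : ℝ := f 0 ^ 2 + δ ^ 2 * I2 + I3 with hBqdef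
    have hBq0 : 0 ≤ Bq :=
      add_nonneg (add_nonneg (sq_nonneg _) (mul_nonneg (sq_nonneg δ) hI20)) hI30
    have hBqpos : 0 < Bq := by
      rcases hBq0.eq_or_lt with hB0 | h
      · exfalso
        have hI2z : I2 = 0 := by nlinarith [sq_nonneg (f 0), hI30, hI20, mul_pos hδ0 hδ0]
        have hae2 : (fun x => (1 + δ * x) ^ (β - 2) * f x ^ 2)
            =ᶠ[MeasureTheory.ae (volume.restrict (Ioi 0))] 0 := by
          refine (integral_eq_zero_iff_of_nonneg_ae ?_ hII2).1 hI2z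
          filter_upwards [ae_restrict_mem (measurableSet_Ioi (a := (0:ℝ)))] with x hx
          exact mul_nonneg (Real.rpow_nonneg (hwpos x (le_of_lt hx)).le _) (sq_nonneg _)
        have hI1z : I1 = 0 := by
          refine integral_eq_zero_of_ae ?_
          filter_upwards [hae2, ae_restrict_mem (measurableSet_Ioi (a := (0:ℝ)))]
            with x hx hx0
          have hwx := hwpos x (le_of_lt hx0)
          have hwp : (0:ℝ) < (1 + δ * x) ^ (β - 2) := Real.rpow_pos_of_pos hwx _
          simp only [Pi.zero_apply] at hx ⊢
          rcases mul_eq_zero.1 hx with h | h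
          · exact absurd h (ne_of_gt hwp)
          · rw [h]; ring
        linarith
      · exact h
    set sq1 : ℝ := Real.sqrt I1 with hsq1def
    have hsq1pos : 0 < sq1 := Real.sqrt_pos.2 hI1pos
    set d : ℝ := δ ^ (-(3 / 2 : ℝ)) with hddef
    have hd : 0 < d := Real.rpow_pos_of_pos hδ0 _
    set t₀ : ℝ := d * Bq / sq1 with ht₀def
    have ht₀ : 0 < t₀ := div_pos (mul_pos hd hBqpos) hsq1pos
    -- main integral bound
    have hmain : (∫ x in Ioi (0:ℝ), (1 + δ * x) ^ (β - 1) * |f x| ^ 3) ≤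
        (t₀ / 2) * I1 + (K / t₀) * I2 := by
      have hmono := setIntegral_mono_on hIcube
        ((hII1.const_mul (t₀ / 2)).add (hII2.const_mul (K / t₀))) measurableSet_Ioi ?_
      · simp only [Pi.add_apply] at hmono
        rw [MeasureTheory.integral_add (hII1.const_mul (t₀ / 2)) (hII2.const_mul (K / t₀)),
          MeasureTheory.integral_const_mul, MeasureTheory.integral_const_mul] at hmono
        exact hmono
      · intro x hx
        have hwx := hwpos x (le_of_lt hx)
        have hgx := key1 x (le_of_lt hx)
        have h6 : (|f x| ^ 3) ^ 2 = ((f x) ^ 2) ^ 3 := by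
          rw [← sq_abs (f x)]; ring
        have hw1e : (1 + δ * x) ^ (β - 1) = (1 + δ * x) * (1 + δ * x) ^ (β - 2) := by
          rw [show β - 1 = 1 + (β - 2) by ring, Real.rpow_add hwx, Real.rpow_one]
        have hc2 : ((1 + δ * x) ^ (β - 1) * |f x| ^ 3) ^ 2 ≤
            ((1 + δ * x) * f x ^ 2) * (2 * K * ((1 + δ * x) ^ (β - 2) * f x ^ 2)) := by
          have e1 : ((1 + δ * x) ^ (β - 1) * |f x| ^ 3) ^ 2 =
              ((1 + δ * x) ^ (β - 1) * f x ^ 2) * ((1 + δ * x) ^ (β - 1) * (f x ^ 2) ^ 2) := by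
            rw [mul_pow, h6]; ring
          have e2 : ((1 + δ * x) ^ (β - 1) * f x ^ 2) * ((1 + δ * x) ^ (β - 1) * (f x ^ 2) ^ 2)
              ≤ (2 * K) * ((1 + δ * x) ^ (β - 1) * (f x ^ 2) ^ 2) :=
            mul_le_mul_of_nonneg_right hgx (by positivity)
          have e3 : (2 * K) * ((1 + δ * x) ^ (β - 1) * (f x ^ 2) ^ 2) =
              ((1 + δ * x) * f x ^ 2) * (2 * K * ((1 + δ * x) ^ (β - 2) * f x ^ 2)) := by
            rw [hw1e]; ring
          rw [e1, ← e3]; exact e2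
        have ham := stmt8_amgm (A := (1 + δ * x) * f x ^ 2)
          (B := 2 * K * ((1 + δ * x) ^ (β - 2) * f x ^ 2)) (t := t₀)
          (by positivity) (mul_nonneg (by linarith) (by positivity)) (by positivity) ht₀ hc2
        have heq3 : (t₀ * ((1 + δ * x) * f x ^ 2) +
            (2 * K * ((1 + δ * x) ^ (β - 2) * f x ^ 2)) / t₀) / 2 =
            (t₀ / 2) * ((1 + δ * x) * f x ^ 2) + (K / t₀) * ((1 + δ * x) ^ (β - 2) * f x ^ 2)
            := by field_simp
        rw [heq3] at ham
        simp only [Pi.add_apply]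
        exact ham
    -- arithmetic
    have hKB : K ≤ Bq / δ := by
      rw [le_div_iff₀ hδ0]
      have e : ((δ / 2) * I2 + (1 / (2 * δ)) * I3) * δ = (δ ^ 2 / 2) * I2 + I3 / 2 := by
        field_simp
      have h5 : K * δ ≤ (δ ^ 2 / 2) * I2 + I3 / 2 := by
        rw [← e]; exact mul_le_mul_of_nonneg_right hKb hδ0.le
      have h6 : (0:ℝ) ≤ (δ ^ 2 / 2) * I2 := mul_nonneg (by positivity) hI20
      have h7 : (δ ^ 2 / 2) * I2 + (δ ^ 2 / 2) * I2 = δ ^ 2 * I2 := by ring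
      nlinarith [sq_nonneg (f 0), hI30]
    have hI2B : I2 ≤ Bq / δ ^ 2 := by
      rw [le_div_iff₀ (by positivity)]
      nlinarith [sq_nonneg (f 0), hI30]
    have hsq1sq : sq1 * sq1 = I1 := Real.mul_self_sqrt hI10
    have hdd : d * d = (δ ^ 3)⁻¹ := by
      rw [hddef, ← Real.rpow_add hδ0]
      rw [show -(3 / 2 : ℝ) + -(3 / 2 : ℝ) = -((3:ℕ):ℝ) by norm_num]
      rw [Real.rpow_neg hδ0.le, Real.rpow_natCast]
    have h1 : (t₀ / 2) * I1 = d * Bq * sq1 / 2 := by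
      rw [ht₀def, ← hsq1sq]
      field_simp
    have h2 : (K / t₀) * I2 ≤ d * sq1 * Bq := by
      have hstep : (K / t₀) * I2 ≤ ((Bq / δ) / t₀) * (Bq / δ ^ 2) := by
        refine mul_le_mul ((div_le_div_iff_of_pos_right ht₀).2 hKB) hI2B hI20 (le_of_lt (div_pos (div_pos hBqpos hδ0) ht₀))
      have heq4 : ((Bq / δ) / t₀) * (Bq / δ ^ 2) = d * sq1 * Bq := by
        rw [ht₀def]
        have hδ3 : δ ^ 3 ≠ 0 := by positivity
        have hdd' : d * d * δ ^ 3 = 1 := by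
          rw [hdd]; field_simp
        field_simp
        linear_combination (-1) * hdd'
      rw [heq4] at hstep
      exact hstep
    have hfin : (t₀ / 2) * I1 + (K / t₀) * I2 ≤ 2 * d * sq1 * Bq := by
      rw [h1]
      nlinarith [mul_pos (mul_pos hd hsq1pos) hBqpos]
    calc (∫ x in Ioi (0:ℝ), (1 + δ * x) ^ (β - 1) * |f x| ^ 3)
        ≤ (t₀ / 2) * I1 + (K / t₀) * I2 := hmain
      _ ≤ 2 * d * sq1 * Bq := hfin
      _ = 2 * d * sq1 * Bq := rfl
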